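/- arXiv:2108.13310 — 2 statements merged into one kernel-verified Lean document; each statement's English description precedes it below -/
import Mathlib

section
/- Let f and g be homotopic (κ,λ)-continuous maps from a digital image (X,κ) to a digital image (Y,λ). Then the induced maps f_*, g_* : (2^X,κ') → (2^Y,λ') defined by f_*(A) = f(A), g_*(A) = g(A) are homotopic, and likewise the induced maps f_*, g_* : K(X,κ') → K(Y,λ') are homotopic. -/
/-- `a` and `b` are adjacent or equal ("⟷≤") with respect to adjacency relation `α`. -/
def AdjEq {A : Type*} (α : A → A → Prop) (a b : A) : Prop := α a b ∨ a = b

/-- `f : (X,κ) → (Y,lam)` is digitally continuous: adjacency is sent to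
adjacency-or-equality. -/
def DigCont {X Y : Type*} (κ : X → X → Prop) (lam : Y → Y → Prop) (f : X → Y) : Prop :=
  ∀ x x', κ x x' → AdjEq lam (f x) (f x')

/-- Continuity of `f` relative to carrier sets: `f` maps `S` into `T` and sends
`α`-adjacent elements of `S` to `β`-adjacent-or-equal elements. -/
def ContOn {A B : Type*} (α : A → A → Prop) (β : B → B → Prop)
    (S : Set A) (T : Set B) (f : A → B) : Prop :=
  (∀ a ∈ S, f a ∈ T) ∧ ∀ a ∈ S, ∀ a' ∈ S, α a a' → AdjEq β (f a) (f a')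

/-- The hyperspace adjacency `κ'`: distinct `A, B` are adjacent iff every point of `A`
is adjacent-or-equal to some point of `B` and vice versa. -/
def HyperAdj {X : Type*} (κ : X → X → Prop) (A B : Finset X) : Prop :=
  A ≠ B ∧ (∀ a ∈ A, ∃ b ∈ B, AdjEq κ a b) ∧ ∀ b ∈ B, ∃ a ∈ A, AdjEq κ b a

/-- A subset `S` is connected w.r.t. adjacency `α`: any two of its points are joined by
a path (finite sequence of consecutively adjacent-or-equal points) lying in `S`. -/
def ConnIn {A : Type*} (α : A → A → Prop) (S : Set A) : Prop :=
  ∀ a ∈ S, ∀ b ∈ S, ∃ (n : ℕ) (p : ℕ → A), p 0 = a ∧ p n = b ∧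
    (∀ i ≤ n, p i ∈ S) ∧ ∀ i < n, AdjEq α (p i) (p (i + 1))

/-- `a` and `b` are joined by a path lying in `S` (i.e. they are in the same
connected component of the graph induced on `S`). -/
def Chain {A : Type*} (α : A → A → Prop) (S : Set A) (a b : A) : Prop :=
  ∃ (n : ℕ) (p : ℕ → A), p 0 = a ∧ p n = b ∧
    (∀ i ≤ n, p i ∈ S) ∧ ∀ i < n, AdjEq α (p i) (p (i + 1))

/-- The carrier of the hyperspace `2^X`: nonempty finite subsets of `X`. -/
def TwoX (X : Type*) : Set (Finset X) := {A | A.Nonempty}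

/-- The carrier of `K(X,κ')`: nonempty finite κ-connected subsets of `X`. -/
def KSet {X : Type*} (κ : X → X → Prop) : Set (Finset X) :=
  {A | A.Nonempty ∧ ConnIn κ (A : Set X)}

/-- A digital homotopy from `f` to `g`, relative to carriers `S`, `T`:
a function `F : S × [0,m] → T` with `F(·,0) = f`, `F(·,m) = g`, all tracks
`t ↦ F(a,t)` are paths, and all time slices `a ↦ F(a,t)` are continuous. -/
def HtpyOn {A B : Type*} (α : A → A → Prop) (β : B → B → Prop)
    (S : Set A) (T : Set B) (f g : A → B) : Prop :=
  ∃ (m : ℕ) (F : A → ℕ → B),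
    (∀ a ∈ S, ∀ t ≤ m, F a t ∈ T) ∧
    (∀ a ∈ S, F a 0 = f a) ∧ (∀ a ∈ S, F a m = g a) ∧
    (∀ a ∈ S, ∀ t < m, AdjEq β (F a t) (F a (t + 1))) ∧
    (∀ t ≤ m, ∀ a ∈ S, ∀ a' ∈ S, α a a' → AdjEq β (F a t) (F a' t))

/-- A digital homotopy from `f` to `g` in exactly `m` steps (on full types). -/
def HtpyN {X Y : Type*} (κ : X → X → Prop) (lam : Y → Y → Prop)
    (f g : X → Y) (m : ℕ) : Prop :=
  ∃ F : X → ℕ → Y,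
    (∀ x, F x 0 = f x) ∧ (∀ x, F x m = g x) ∧
    (∀ x, ∀ t < m, AdjEq lam (F x t) (F x (t + 1))) ∧
    (∀ t ≤ m, DigCont κ lam fun x => F x t)

/-- `f` and `g` are digitally homotopic. -/
def Htpy {X Y : Type*} (κ : X → X → Prop) (lam : Y → Y → Prop) (f g : X → Y) : Prop :=
  ∃ m, HtpyN κ lam f g m

/-- The graphs on carriers `S` and `T` have the same homotopy type. -/
def HtpyEquivOn {A B : Type*} (α : A → A → Prop) (β : B → B → Prop)
    (S : Set A) (T : Set B) : Prop :=
  ∃ (f : A → B) (g : B → A),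
    ContOn α β S T f ∧ ContOn β α T S g ∧
    HtpyOn α α S S (g ∘ f) id ∧ HtpyOn β β T T (f ∘ g) id

/-- The graph on carrier `S` is contractible: the identity is homotopic to a constant. -/
def ContractibleOn {A : Type*} (α : A → A → Prop) (S : Set A) : Prop :=
  ∃ c ∈ S, HtpyOn α α S S id fun _ => c

/-- `Φ`-adjacency of functions: `f ≠ g` and `f(x) ⟷≤ g(x)` for all `x`. -/
def PhiAdj {X Y : Type*} (lam : Y → Y → Prop) (f g : X → Y) : Prop :=
  f ≠ g ∧ ∀ x, AdjEq lam (f x) (g x)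

/-- `Ψ`-adjacency of functions: `f ≠ g` and `x₀ ⟷≤ x₁` implies `f(x₀) ⟷≤ g(x₁)`. -/
def PsiAdj {X Y : Type*} (κ : X → X → Prop) (lam : Y → Y → Prop) (f g : X → Y) : Prop :=
  f ≠ g ∧ ∀ x₀ x₁, AdjEq κ x₀ x₁ → AdjEq lam (f x₀) (g x₁)

/-- `C` is a connected component of the graph induced on the vertex set `V`:
a maximal connected subset of `V`. -/
def IsComponentIn {A : Type*} (α : A → A → Prop) (V C : Set A) : Prop :=
  C ⊆ V ∧ ConnIn α C ∧ ∀ C' : Set A, C' ⊆ V → ConnIn α C' → C ⊆ C' → C' = C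



lemma adjEq_map {X Y : Type*} {κ : X → X → Prop} {lam : Y → Y → Prop} {u : X → Y}
    (hu : DigCont κ lam u) {a b : X} (h : AdjEq κ a b) : AdjEq lam (u a) (u b) := by
  rcases h with h | rfl
  · exact hu _ _ h
  · exact Or.inr rfl

lemma img_adjEq {X Y : Type*} [DecidableEq Y] (lam : Y → Y → Prop)
    (A B : Finset X) (u v : X → Y)
    (h1 : ∀ a ∈ A, ∃ b ∈ B, AdjEq lam (u a) (v b))
    (h2 : ∀ b ∈ B, ∃ a ∈ A, AdjEq lam (v b) (u a)) :
    AdjEq (HyperAdj lam) (A.image u) (B.image v) := by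
  by_cases he : A.image u = B.image v
  · exact Or.inr he
  · left
    refine ⟨he, ?_, ?_⟩
    · intro y hy
      rcases Finset.mem_image.mp hy with ⟨a, ha, rfl⟩
      rcases h1 a ha with ⟨b, hb, hab⟩
      exact ⟨v b, Finset.mem_image_of_mem _ hb, hab⟩
    · intro y hy
      rcases Finset.mem_image.mp hy with ⟨b, hb, rfl⟩
      rcases h2 b hb with ⟨a, ha, hab⟩
      exact ⟨u a, Finset.mem_image_of_mem _ ha, hab⟩

lemma conn_image {X Y : Type*} [DecidableEq Y] {κ : X → X → Prop} {lam : Y → Y → Prop}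
    {u : X → Y} (hu : DigCont κ lam u) {A : Finset X} (hA : ConnIn κ (A : Set X)) :
    ConnIn lam ((A.image u : Finset Y) : Set Y) := by
  intro a' ha' b' hb'
  rcases Finset.mem_image.mp (Finset.mem_coe.mp ha') with ⟨a, ha, rfl⟩
  rcases Finset.mem_image.mp (Finset.mem_coe.mp hb') with ⟨b, hb, rfl⟩
  rcases hA a ha b hb with ⟨n, p, hp0, hpn, hmem, hadj⟩
  exact ⟨n, fun i => u (p i), by simp [hp0], by simp [hpn],
    fun i hi => Finset.mem_coe.mpr (Finset.mem_image_of_mem u (Finset.mem_coe.mp (hmem i hi))),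
    fun i hi => adjEq_map hu (hadj i hi)⟩

/-- if `f` and `g` are homotopic `(κ,lam)`-continuous maps, then the
induced maps `A ↦ f(A)` and `A ↦ g(A)` are homotopic as maps `2^X → 2^Y`, and as maps
`K(X,κ') → K(Y,lam')`. -/
theorem stmt2 {X Y : Type*} [DecidableEq Y]
    (κ : X → X → Prop) (lam : Y → Y → Prop)
    (hκsymm : ∀ x y, κ x y → κ y x) (hκirr : ∀ x, ¬ κ x x)
    (hlsymm : ∀ x y, lam x y → lam y x) (hlirr : ∀ y, ¬ lam y y)
    (f g : X → Y) (hf : DigCont κ lam f) (hg : DigCont κ lam g)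
    (h : Htpy κ lam f g) :
    HtpyOn (HyperAdj κ) (HyperAdj lam) (TwoX X) (TwoX Y)
      (fun A => A.image f) (fun A => A.image g) ∧
    HtpyOn (HyperAdj κ) (HyperAdj lam) (KSet κ) (KSet lam)
      (fun A => A.image f) (fun A => A.image g) := by

  obtain ⟨m, F, hF0, hFm, htrack, hslice⟩ := h
  set G : Finset X → ℕ → Finset Y := fun A t => A.image (fun x => F x t) with hG
  have adjl_symm : ∀ y y', AdjEq lam y y' → AdjEq lam y' y := by
    intro y y' h
    rcases h with h | rfl
    · exact Or.inl (hlsymm _ _ h)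
    · exact Or.inr rfl
  have hzero : ∀ A : Finset X, G A 0 = A.image f := by
    intro A
    exact Finset.image_congr fun x _ => hF0 x
  have hlast : ∀ A : Finset X, G A m = A.image g := by
    intro A
    exact Finset.image_congr fun x _ => hFm x
  have htr : ∀ (A : Finset X), ∀ t < m, AdjEq (HyperAdj lam) (G A t) (G A (t + 1)) := by
    intro A t ht
    exact img_adjEq lam A A _ _
      (fun a ha => ⟨a, ha, htrack a t ht⟩)
      (fun a ha => ⟨a, ha, adjl_symm _ _ (htrack a t ht)⟩)
  have hsl : ∀ t ≤ m, ∀ A B : Finset X, HyperAdj κ A B →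
      AdjEq (HyperAdj lam) (G A t) (G B t) := by
    intro t ht A B hAB
    refine img_adjEq lam A B _ _ ?_ ?_
    · intro a ha
      rcases hAB.2.1 a ha with ⟨b, hb, hab⟩
      exact ⟨b, hb, adjEq_map (hslice t ht) hab⟩
    · intro b hb
      rcases hAB.2.2 b hb with ⟨a, ha, hab⟩
      exact ⟨a, ha, adjEq_map (hslice t ht) hab⟩
  constructor
  · refine ⟨m, G, ?_, fun A _ => hzero A, fun A _ => hlast A,
      fun A _ t ht => htr A t ht, fun t ht A _ B _ hAB => hsl t ht A B hAB⟩
    intro A hA t _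
    exact hA.image _
  · refine ⟨m, G, ?_, fun A _ => hzero A, fun A _ => hlast A,
      fun A _ t ht => htr A t ht, fun t ht A _ B _ hAB => hsl t ht A B hAB⟩
    intro A hA t ht
    exact ⟨hA.1.image _, conn_image (hslice t ht) hA.2⟩
end

section
/- Let (X,κ) be a finite connected digital image. Then K(X,κ') is κ'-connected. -/
private theorem chain_refl' {A : Type*} (α : A → A → Prop) (S : Set A) (a : A) (ha : a ∈ S) :
    Chain α S a a :=
  ⟨0, fun _ => a, rfl, rfl, fun _ _ => ha, fun i h => absurd h (Nat.not_lt_zero i)⟩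

private theorem chain_step' {A : Type*} (α : A → A → Prop) (S : Set A) {a b : A}
    (ha : a ∈ S) (hb : b ∈ S) (hab : AdjEq α a b) : Chain α S a b := by
  refine ⟨1, fun i => if i = 0 then a else b, by simp, by simp, ?_, ?_⟩
  · intro i _; dsimp only; split <;> assumption
  · intro i hi; interval_cases i; simpa using hab

private theorem chain_trans' {A : Type*} (α : A → A → Prop) (S : Set A) {a b c : A}
    (h1 : Chain α S a b) (h2 : Chain α S b c) : Chain α S a c := by
  obtain ⟨n, p, hp0, hpn, hpS, hpadj⟩ := h1
  obtain ⟨m, q, hq0, hqm, hqS, hqadj⟩ := h2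
  refine ⟨n + m, fun i => if i ≤ n then p i else q (i - n), by simp [hp0], ?_, ?_, ?_⟩
  · rcases Nat.eq_zero_or_pos m with hm | hm
    · subst hm
      simp only [Nat.add_zero, le_refl, if_pos]
      rw [hpn, ← hq0, hqm]
    · have h : ¬ (n + m ≤ n) := by omega
      simp [h, hqm]
  · intro i hi
    by_cases h : i ≤ n
    · simp only [h, if_pos]; exact hpS i h
    · simp only [h, if_neg]; exact hqS (i - n) (by omega)
  · intro i hi
    by_cases h : i + 1 ≤ n
    · simp only [show i ≤ n by omega, h, if_pos]
      exact hpadj i (by omega)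
    · by_cases h' : i ≤ n
      · have hin : i = n := by omega
        subst hin
        simp only [h', if_pos, h, if_neg, Nat.add_sub_cancel_left]
        rw [hpn, ← hq0]
        exact hqadj 0 (by omega)
      · simp only [h', if_neg, h, if_neg]
        have : i + 1 - n = (i - n) + 1 := by omega
        rw [this]
        exact hqadj (i - n) (by omega)

private theorem chain_symm' {A : Type*} {α : A → A → Prop} (hs : ∀ x y, α x y → α y x)
    (S : Set A) {a b : A} (h : Chain α S a b) : Chain α S b a := by
  obtain ⟨n, p, hp0, hpn, hpS, hpadj⟩ := h
  refine ⟨n, fun i => p (n - i), by simp [hpn], by simp [hp0], fun i hi => hpS _ (by omega), ?_⟩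
  intro i hi
  have h1 : n - i = (n - (i + 1)) + 1 := by omega
  dsimp only
  rw [h1]
  rcases hpadj (n - (i + 1)) (by omega) with h | h
  · exact Or.inl (hs _ _ h)
  · exact Or.inr h.symm

private theorem chain_mono' {A : Type*} (α : A → A → Prop) {S T : Set A} (hST : S ⊆ T)
    {a b : A} (h : Chain α S a b) : Chain α T a b := by
  obtain ⟨n, p, hp0, hpn, hpS, hpadj⟩ := h
  exact ⟨n, p, hp0, hpn, fun i hi => hST (hpS i hi), hpadj⟩

private theorem hyper_symm' {X : Type*} {κ : X → X → Prop} {A B : Finset X}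
    (h : HyperAdj κ A B) : HyperAdj κ B A :=
  ⟨h.1.symm, h.2.2, h.2.1⟩

private theorem kset_insert' {X : Type*} [DecidableEq X] {κ : X → X → Prop}
    (hs : ∀ x y, κ x y → κ y x) {A : Finset X} {x a : X}
    (hA : A ∈ KSet κ) (ha : a ∈ A) (hx : x ∉ A) (hadj : κ a x) :
    insert x A ∈ KSet κ ∧ HyperAdj κ A (insert x A) := by
  obtain ⟨hne, hconn⟩ := hA
  have hsub : (↑A : Set X) ⊆ ↑(insert x A) := by
    intro y hy; simp only [Finset.coe_insert, Set.mem_insert_iff]; right; exact hy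
  have hxmem : x ∈ (↑(insert x A) : Set X) := by simp
  have key : ∀ u ∈ (↑(insert x A) : Set X), Chain κ (↑(insert x A)) u a := by
    intro u hu
    simp only [Finset.coe_insert, Set.mem_insert_iff] at hu
    rcases hu with hu | hu
    · subst hu
      exact chain_step' _ _ hxmem (hsub ha) (Or.inl (hs _ _ hadj))
    · exact chain_mono' _ hsub (hconn u hu a ha)
  refine ⟨⟨⟨x, Finset.mem_insert_self x A⟩, ?_⟩, ?_, ?_, ?_⟩
  · intro u hu v hv
    exact chain_trans' _ _ (key u hu) (chain_symm' hs _ (key v hv))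
  · intro h
    exact hx (h ▸ Finset.mem_insert_self x A)
  · intro a' ha'
    exact ⟨a', Finset.mem_insert_of_mem ha', Or.inr rfl⟩
  · intro b hb
    rcases Finset.mem_insert.mp hb with hb | hb
    · exact ⟨a, ha, Or.inl (hb ▸ hs _ _ hadj)⟩
    · exact ⟨b, hb, Or.inr rfl⟩

private theorem boundary' {X : Type*} [Fintype X] {κ : X → X → Prop}
    (hconn : ConnIn κ (Set.univ : Set X)) {A : Finset X} (hne : A.Nonempty)
    (hA : A ≠ Finset.univ) : ∃ x ∉ A, ∃ a ∈ A, κ a x := by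
  obtain ⟨a0, ha0⟩ := hne
  have hy : ∃ y, y ∉ A := by
    by_contra h
    push_neg at h
    exact hA (Finset.eq_univ_iff_forall.mpr h)
  obtain ⟨y, hy⟩ := hy
  obtain ⟨n, p, hp0, hpn, _, hpadj⟩ := hconn a0 trivial y trivial
  have key : ∀ j ≤ n, p j ∈ A ∨ ∃ x ∉ A, ∃ a ∈ A, κ a x := by
    intro j hj
    induction j with
    | zero => exact Or.inl (hp0 ▸ ha0)
    | succ k ih =>
      rcases ih (by omega) with hk | hk
      · by_cases hk1 : p (k + 1) ∈ A
        · exact Or.inl hk1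
        · refine Or.inr ⟨p (k + 1), hk1, p k, hk, ?_⟩
          rcases hpadj k (by omega) with h | h
          · exact h
          · exact absurd (h ▸ hk) hk1
      · exact Or.inr hk
  rcases key n le_rfl with h | h
  · exact absurd (hpn ▸ h) hy
  · exact h

private theorem grow' {X : Type*} [Fintype X] [DecidableEq X] {κ : X → X → Prop}
    (hs : ∀ x y, κ x y → κ y x)
    (hconn : ConnIn κ (Set.univ : Set X)) :
    ∀ A ∈ KSet κ, Chain (HyperAdj κ) (KSet κ) A Finset.univ := by
  have H : ∀ k, ∀ A ∈ KSet κ, (Finset.univ \ A).card = k →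
      Chain (HyperAdj κ) (KSet κ) A Finset.univ := by
    intro k
    induction k using Nat.strong_induction_on with
    | _ k ih =>
      intro A hA hcard
      by_cases heq : A = Finset.univ
      · subst heq; exact chain_refl' _ _ _ hA
      · obtain ⟨x, hx, a, ha, hadj⟩ := boundary' hconn hA.1 heq
        obtain ⟨hK, hH⟩ := kset_insert' hs hA ha hx hadj
        have hmem : x ∈ Finset.univ \ A := by simp [hx]
        have hpos : 0 < (Finset.univ \ A).card := Finset.card_pos.mpr ⟨x, hmem⟩
        have hcard' : (Finset.univ \ insert x A).card < k := by
          rw [Finset.sdiff_insert, Finset.card_erase_of_mem hmem]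
          omega
        exact chain_trans' _ _ (chain_step' _ _ hA hK (Or.inl hH))
          (ih _ hcard' _ hK rfl)
  exact fun A hA => H _ A hA rfl

/-- if `(X,κ)` is a finite connected digital image, then `K(X,κ')` is
`κ'`-connected. -/
theorem stmt14 {X : Type*} [Finite X]
    (κ : X → X → Prop)
    (hκsymm : ∀ x y, κ x y → κ y x) (hκirr : ∀ x, ¬ κ x x)
    (hconn : ConnIn κ (Set.univ : Set X)) :
    ConnIn (HyperAdj κ) (KSet κ) := by
  classical
  cases nonempty_fintype X
  intro A hA B hB
  exact chain_trans' _ _ (grow' hκsymm hconn A hA)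
    (chain_symm' (fun _ _ => hyper_symm') _ (grow' hκsymm hconn B hB))
end
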